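/- Every n-dimensional nilpotent Lie algebra L over a field with dim L² = 1 decomposes as L = H ⊕ A with H a Heisenberg Lie algebra and A abelian. -/

import Mathlib

open Module

/-- The direct sum of two Lie rings. -/
instance prodLieRing (M N : Type*) [LieRing M] [LieRing N] : LieRing (M × N) where
  bracket x y := (⁅x.1, y.1⁆, ⁅x.2, y.2⁆)
  add_lie x y z := Prod.ext (add_lie x.1 y.1 z.1) (add_lie x.2 y.2 z.2)
  lie_add x y z := Prod.ext (lie_add x.1 y.1 z.1) (lie_add x.2 y.2 z.2)
  lie_self x := Prod.ext (lie_self x.1) (lie_self x.2)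
  leibniz_lie x y z := Prod.ext (leibniz_lie x.1 y.1 z.1) (leibniz_lie x.2 y.2 z.2)

instance prodLieAlgebra (F M N : Type*) [CommRing F] [LieRing M] [LieRing N]
    [LieAlgebra F M] [LieAlgebra F N] : LieAlgebra F (M × N) where
  lie_smul c x y := Prod.ext (lie_smul c x.1 y.1) (lie_smul c x.2 y.2)

section Defs

variable (F : Type*) [Field F]

/-- A Lie pairing `L × L → T` for the self-action of `L` by its Lie bracket. -/
structure IsLiePairing (L T : Type*) [LieRing L] [LieAlgebra F L] [LieRing T]
    [LieAlgebra F T] (h : L →ₗ[F] L →ₗ[F] T) : Prop where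
  rel1 : ∀ m m' n : L, h ⁅m, m'⁆ n = h m ⁅m', n⁆ - h m' ⁅m, n⁆
  rel2 : ∀ m n n' : L, h m ⁅n, n'⁆ = h ⁅n', m⁆ n - h ⁅n, m⁆ n'
  rel3 : ∀ m n m' n' : L, ⁅h m n, h m' n'⁆ = - h ⁅n, m⁆ ⁅m', n'⁆

/-- `T`, together with the universal pairing `t`, is the nonabelian tensor square of `L`. -/
structure IsTensorSquare (L T : Type*) [LieRing L] [LieAlgebra F L] [LieRing T]
    [LieAlgebra F T] (t : L →ₗ[F] L →ₗ[F] T) : Prop where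
  pairing : IsLiePairing F L T t
  universal : ∀ (P : Type) [LieRing P] [LieAlgebra F P] (h : L →ₗ[F] L →ₗ[F] P),
    IsLiePairing F L P h → ∃! f : T →ₗ⁅F⁆ P, ∀ m n, f (t m n) = h m n

/-- A Lie pairing `M × N → T` when `M` and `N` act trivially on each other. -/
structure IsTrivialPairing (M N T : Type*) [LieRing M] [LieAlgebra F M] [LieRing N]
    [LieAlgebra F N] [LieRing T] [LieAlgebra F T] (h : M →ₗ[F] N →ₗ[F] T) : Prop where
  rel1 : ∀ (m m' : M) (n : N), h ⁅m, m'⁆ n = 0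
  rel2 : ∀ (m : M) (n n' : N), h m ⁅n, n'⁆ = 0
  rel3 : ∀ (m : M) (n : N) (m' : M) (n' : N), ⁅h m n, h m' n'⁆ = 0

/-- The nonabelian tensor product `M ⊗ N` for trivial mutual actions. -/
structure IsTrivialTensor (M N T : Type*) [LieRing M] [LieAlgebra F M] [LieRing N]
    [LieAlgebra F N] [LieRing T] [LieAlgebra F T] (t : M →ₗ[F] N →ₗ[F] T) : Prop where
  pairing : IsTrivialPairing F M N T t
  universal : ∀ (P : Type) [LieRing P] [LieAlgebra F P] (h : M →ₗ[F] N →ₗ[F] P),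
    IsTrivialPairing F M N P h → ∃! f : T →ₗ⁅F⁆ P, ∀ m n, f (t m n) = h m n

/-- The exterior square `L ∧ L`: universal Lie pairing vanishing on the diagonal. -/
structure IsExteriorSquare (L W : Type*) [LieRing L] [LieAlgebra F L] [LieRing W]
    [LieAlgebra F W] (w : L →ₗ[F] L →ₗ[F] W) : Prop where
  pairing : IsLiePairing F L W w
  diag : ∀ l : L, w l l = 0
  universal : ∀ (P : Type) [LieRing P] [LieAlgebra F P] (h : L →ₗ[F] L →ₗ[F] P),
    IsLiePairing F L P h → (∀ l, h l l = 0) → ∃! f : W →ₗ⁅F⁆ P, ∀ m n, f (w m n) = h m n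

/-- A quadratic map between modules. -/
def IsQuadraticMap (V G : Type*) [AddCommGroup V] [Module F V] [AddCommGroup G]
    [Module F G] (q : V → G) : Prop :=
  (∀ (c : F) (v : V), q (c • v) = (c * c) • q v) ∧
    ∃ b : V →ₗ[F] V →ₗ[F] G, ∀ v v' : V, q (v + v') = q v + q v' + b v v'

/-- `G`, with the universal quadratic map `γ`, is Whitehead's universal quadratic
functor `Γ(V)`. -/
structure IsGamma (V G : Type*) [AddCommGroup V] [Module F V] [AddCommGroup G]
    [Module F G] (γ : V → G) : Prop where
  quad : IsQuadraticMap F V G γ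
  universal : ∀ (P : Type) [AddCommGroup P] [Module F P] (q : V → P),
    IsQuadraticMap F V P q → ∃! f : G →ₗ[F] P, ∀ v, f (γ v) = q v

/-- A finite-dimensional Lie algebra is the Heisenberg algebra `H(m)` iff it has
dimension `2m+1`, its derived subalgebra equals its centre, and that is one dimensional. -/
def IsHeisenberg (H : Type*) [LieRing H] [LieAlgebra F H] (m : ℕ) : Prop :=
  finrank F H = 2 * m + 1 ∧
    LieAlgebra.derivedSeries F H 1 = LieAlgebra.center F H ∧
    finrank F (LieAlgebra.derivedSeries F H 1) = 1

end Defs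

/-- `L` decomposes as a direct sum of a Heisenberg algebra `H(m)` and an abelian Lie
algebra of dimension `k`. -/
def DecomposesAs (F : Type*) [Field F] (L : Type*) [LieRing L] [LieAlgebra F L]
    (m k : ℕ) : Prop :=
  ∃ H A : LieSubalgebra F L,
    (∀ x ∈ H, ∀ y ∈ A, ⁅x, y⁆ = 0) ∧ IsCompl H.toSubmodule A.toSubmodule ∧
      IsHeisenberg F H m ∧ IsLieAbelian A ∧ finrank F A = k


theorem even_finrank_of_alt_nondeg (F : Type*) [Field F] :
    ∀ (n : ℕ) (V : Type*) [AddCommGroup V] [Module F V] [FiniteDimensional F V],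
    finrank F V = n → ∀ B : LinearMap.BilinForm F V, B.IsAlt → B.Nondegenerate → Even n := by
  intro n
  induction n using Nat.strong_induction_on with
  | _ n IH =>
    intro V _ _ _ hdim B halt hnd
    rcases Nat.eq_zero_or_pos n with hn | hn
    · simp [hn]
    have hV : Nontrivial V := by
      rw [← Module.finrank_pos_iff (R := F)]; omega
    obtain ⟨v, hv⟩ := exists_ne (0 : V)
    obtain ⟨w0, hw0⟩ : ∃ w, B v w ≠ 0 := by
      by_contra h
      push_neg at h
      exact hv (hnd.1 v h)
    set w : V := (B v w0)⁻¹ • w0 with hw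
    have hvw : B v w = 1 := by
      simp only [hw, map_smul, smul_eq_mul]
      field_simp
    have hwv : B w v = -1 := by
      rw [← halt.neg_eq, hvw]
    set P : Submodule F V := Submodule.span F {v, w} with hP
    have hvP : v ∈ P := Submodule.subset_span (by simp)
    have hwP : w ∈ P := Submodule.subset_span (by simp)
    have hrestr : (B.restrict P).Nondegenerate := by
      refine (LinearMap.IsRefl.nondegenerate_iff_separatingLeft (B := B.restrict P) (fun x y h => halt.isRefl x y h)).mpr ?_
      intro x hx
      obtain ⟨a, b, hab⟩ := Submodule.mem_span_pair.mp x.2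
      have h1 : B (x : V) w = a := by
        rw [← hab]; simp [halt w, hvw]
      have h2 : B (x : V) v = -b := by
        rw [← hab]; simp [halt v, hwv]
      have ha : a = 0 := by
        have := hx ⟨w, hwP⟩
        simpa [LinearMap.BilinForm.restrict_apply, h1] using this
      have hb : b = 0 := by
        have := hx ⟨v, hvP⟩
        simp only [LinearMap.BilinForm.restrict_apply, LinearMap.domRestrict_apply] at this
        have : B (x : V) v = 0 := this
        rw [h2] at this
        simpa using this
      apply Subtype.ext
      rw [← hab, ha, hb]; simp
    have hli : LinearIndependent F ![v, w] := by
      rw [LinearIndependent.pair_iff]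
      intro s t hst
      have h1 : B (s • v + t • w) w = s := by simp [halt w, hvw]
      have h2 : B (s • v + t • w) v = -t := by simp [halt v, hwv]
      rw [hst] at h1 h2
      simp only [map_zero, LinearMap.zero_apply] at h1 h2
      refine ⟨h1.symm, ?_⟩
      have := h2.symm
      simpa [neg_eq_zero] using this
    have hPrank : finrank F P = 2 := by
      have hPr : P = Submodule.span F (Set.range ![v, w]) := by
        rw [hP]; congr 1
        simp [Matrix.range_cons, Matrix.range_empty, Set.pair_comm]
      rw [hPr, finrank_span_eq_card hli]
      simp
    have hcompl : IsCompl P (B.orthogonal P) :=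
      LinearMap.BilinForm.isCompl_orthogonal_of_restrict_nondegenerate halt.isRefl hrestr
    set Q := B.orthogonal P with hQ
    have hQrank : finrank F P + finrank F Q = n := by
      rw [← hdim, ← Submodule.finrank_sup_add_finrank_inf_eq]
      rw [hcompl.sup_eq_top, hcompl.inf_eq_bot]
      simp
    have haltQ : (B.restrict Q).IsAlt := fun x => halt x
    have hndQ : (B.restrict Q).Nondegenerate := by
      refine (LinearMap.IsRefl.nondegenerate_iff_separatingLeft (B := B.restrict Q) (fun x y h => halt.isRefl x y h)).mpr ?_
      intro x hx
      have hxV : ∀ y : V, B (x : V) y = 0 := by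
        intro y
        obtain ⟨p, hp, q, hq, rfl⟩ := Submodule.mem_sup.mp
          (show y ∈ P ⊔ Q by rw [hcompl.sup_eq_top]; trivial)
        have hxp : B (x : V) p = 0 := by
          have hpx : B p (x : V) = 0 :=
            (LinearMap.BilinForm.mem_orthogonal_iff.mp x.2) p hp
          exact halt.isRefl p (x : V) hpx
        have hxq : B (x : V) q = 0 := by
          have := hx ⟨q, hq⟩
          simpa [LinearMap.BilinForm.restrict_apply] using this
        rw [map_add, hxp, hxq, add_zero]
      exact Subtype.ext (hnd.1 x hxV)
    have hQlt : finrank F Q < n := by omega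
    have hevenQ : Even (finrank F Q) :=
      IH (finrank F Q) hQlt Q rfl (B.restrict Q) haltQ hndQ
    have : n = 2 + finrank F Q := by omega
    rw [this]
    exact even_two.add hevenQ

open Module

/-- Auxiliary bilinear form: bracket followed by a functional. -/
def bracketForm (F : Type*) [Field F] (L : Type*) [LieRing L] [LieAlgebra F L]
    (C Ds : Submodule F L) (hbr : ∀ x y : L, ⁅x, y⁆ ∈ Ds) (φ : ↥Ds →ₗ[F] F) :
    LinearMap.BilinForm F ↥C :=
  LinearMap.mk₂ F (fun c c' => φ ⟨⁅(c : L), (c' : L)⁆, hbr _ _⟩)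
    (by intro m₁ m₂ n; rw [← map_add]; congr 1; apply Subtype.ext; simp [add_lie])
    (by intro a m n; rw [← map_smul]; congr 1; apply Subtype.ext; simp [smul_lie])
    (by intro m n₁ n₂; rw [← map_add]; congr 1; apply Subtype.ext; simp [lie_add])
    (by intro a m n; rw [← map_smul]; congr 1; apply Subtype.ext; simp [lie_smul])

theorem bracketForm_apply (F : Type*) [Field F] (L : Type*) [LieRing L] [LieAlgebra F L]
    (C Ds : Submodule F L) (hbr : ∀ x y : L, ⁅x, y⁆ ∈ Ds) (φ : ↥Ds →ₗ[F] F)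
    (c c' : ↥C) : bracketForm F L C Ds hbr φ c c' = φ ⟨⁅(c : L), (c' : L)⁆, hbr _ _⟩ := rfl

/-- Every nilpotent Lie algebra with one-dimensional derived subalgebra is the
direct sum of a Heisenberg algebra and an abelian Lie algebra. -/
theorem stmt16 (F : Type*) [Field F] (L : Type*) [LieRing L] [LieAlgebra F L]
    [LieRing.IsNilpotent L] [FiniteDimensional F L]
    (hm : finrank F (LieAlgebra.derivedSeries F L 1) = 1) :
    ∃ m k : ℕ, DecomposesAs F L m k := by
  classical
  set D : LieIdeal F L := LieAlgebra.derivedSeries F L 1 with hD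
  have hDbr : D = ⁅(⊤ : LieIdeal F L), (⊤ : LieIdeal F L)⁆ := by
    rw [hD, LieAlgebra.derivedSeries_def,
      show (1 : ℕ) = 0 + 1 from rfl, LieAlgebra.derivedSeriesOfIdeal_succ,
      LieAlgebra.derivedSeriesOfIdeal_zero]
  have hbrkt : ∀ x y : L, ⁅x, y⁆ ∈ D := by
    intro x y
    rw [hDbr]
    exact LieSubmodule.lie_mem_lie (LieSubmodule.mem_top x) (LieSubmodule.mem_top y)
  have hDne : D ≠ ⊥ := by
    intro h
    rw [h] at hm
    have h0 : finrank F (↥(⊥ : Submodule F L)) = 1 := hm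
    simp [finrank_bot] at h0
  have hlcs1 : LieModule.lowerCentralSeries F L L 1 = D := by
    rw [hDbr, LieModule.lowerCentralSeries_succ, LieModule.lowerCentralSeries_zero]
  have hlie_bot : ⁅(⊤ : LieIdeal F L), D⁆ = ⊥ := by
    by_contra hne
    have hle : ⁅(⊤ : LieIdeal F L), D⁆ ≤ D := LieSubmodule.lie_le_right _ _
    have heq : ⁅(⊤ : LieIdeal F L), D⁆ = D := by
      have h1 : (1 : ℕ) ≤ finrank F ↥(⁅(⊤ : LieIdeal F L), D⁆) := by
        rw [Nat.one_le_iff_ne_zero]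
        intro h0
        apply hne
        rw [← LieSubmodule.toSubmodule_inj]
        simpa using Submodule.finrank_eq_zero.mp h0
      rw [← LieSubmodule.toSubmodule_inj]
      apply Submodule.eq_of_le_of_finrank_le hle
      have hm' : finrank F ↥(D.toSubmodule) = 1 := hm
      have h1' : (1 : ℕ) ≤ finrank F ↥((⁅(⊤ : LieIdeal F L), D⁆ : LieIdeal F L).toSubmodule) := h1
      omega
    have hall : ∀ k, LieModule.lowerCentralSeries F L L (k + 1) = D := by
      intro k
      induction k with
      | zero => exact hlcs1
      | succ k ih => rw [LieModule.lowerCentralSeries_succ, ih, heq]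
    obtain ⟨k, hk⟩ := (LieModule.isNilpotent_iff (R := F) (L := L) (M := L)).mp inferInstance
    apply hDne
    rw [← hall k]
    exact le_bot_iff.mp (hk ▸ LieModule.antitone_lowerCentralSeries F L L (Nat.le_succ k))
  have hDZ : ∀ (x d : L), d ∈ D → ⁅x, d⁆ = 0 := by
    intro x d hd
    have : ⁅x, d⁆ ∈ (⊥ : LieIdeal F L) := by
      rw [← hlie_bot]
      exact LieSubmodule.lie_mem_lie (LieSubmodule.mem_top x) hd
    simpa using this
  set Z : LieIdeal F L := LieAlgebra.center F L with hZ
  have hZmem : ∀ z : L, z ∈ Z ↔ ∀ x : L, ⁅x, z⁆ = 0 := fun z =>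
    LieModule.mem_maxTrivSubmodule F L L z
  have hDleZ : D.toSubmodule ≤ Z.toSubmodule := by
    intro d hd
    exact (hZmem d).mpr (fun x => hDZ x d hd)
  -- complement of the centre
  obtain ⟨C, hC⟩ := Submodule.exists_isCompl (Z.toSubmodule)
  -- complement of D inside the centre
  obtain ⟨A', hA'⟩ := Submodule.exists_isCompl
    (D.toSubmodule.comap Z.toSubmodule.subtype)
  set A : Submodule F L := A'.map Z.toSubmodule.subtype with hA
  have hsubinj : Function.Injective Z.toSubmodule.subtype := Submodule.injective_subtype _
  have hAleZ : A ≤ Z.toSubmodule := by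
    rw [hA]; exact Submodule.map_subtype_le _ _
  have hDmap : (D.toSubmodule.comap Z.toSubmodule.subtype).map Z.toSubmodule.subtype
      = D.toSubmodule := by
    rw [Submodule.map_comap_eq, Submodule.range_subtype]
    exact inf_eq_right.mpr hDleZ
  have hADinf : A ⊓ D.toSubmodule = ⊥ := by
    rw [hA, ← hDmap, ← Submodule.map_inf _ hsubinj, hA'.symm.inf_eq_bot, Submodule.map_bot]
  have hADsup : A ⊔ D.toSubmodule = Z.toSubmodule := by
    rw [hA, ← hDmap, ← Submodule.map_sup, hA'.symm.sup_eq_top, Submodule.map_top,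
      Submodule.range_subtype]
  -- decomposition of elements
  have hdecomp : ∀ x : L, ∃ c ∈ C, ∃ z ∈ Z.toSubmodule, x = c + z := by
    intro x
    obtain ⟨z, hz, c, hc, hx⟩ := Submodule.mem_sup.mp
      (show x ∈ Z.toSubmodule ⊔ C by rw [hC.sup_eq_top]; trivial)
    exact ⟨c, hc, z, hz, by rw [← hx, add_comm]⟩
  set Hs : Submodule F L := C ⊔ D.toSubmodule with hHs
  set H : LieSubalgebra F L :=
    { Hs with
      lie_mem' := fun {x y} _ _ => Submodule.mem_sup_right (hbrkt x y) } with hHdef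
  have hHsub : H.toSubmodule = Hs := rfl
  set AA : LieSubalgebra F L :=
    { A with
      lie_mem' := fun {x y} _ hy => by
        have : ⁅x, y⁆ = 0 := (hZmem y).mp (hAleZ hy) x
        rw [this]; exact A.zero_mem } with hAAdef
  have hAAsub : AA.toSubmodule = A := rfl
  -- brackets between H and A vanish
  have hcomm : ∀ x ∈ H, ∀ y ∈ AA, ⁅x, y⁆ = 0 := by
    intro x _ y hy
    exact (hZmem y).mp (hAleZ hy) x
  -- IsCompl
  have hcompl : IsCompl H.toSubmodule AA.toSubmodule := by
    rw [hHsub, hAAsub]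
    constructor
    · rw [disjoint_iff]
      rw [eq_bot_iff]
      intro x hx
      obtain ⟨hxH, hxA⟩ := Submodule.mem_inf.mp hx
      obtain ⟨c, hc, d, hd, hx⟩ := Submodule.mem_sup.mp hxH
      have hxZ : x ∈ Z.toSubmodule := hAleZ hxA
      have hcZ : c ∈ Z.toSubmodule := by
        have : c = x - d := by rw [← hx]; abel
        rw [this]
        exact Submodule.sub_mem _ hxZ (hDleZ hd)
      have hc0 : c = 0 := by
        have : c ∈ Z.toSubmodule ⊓ C := Submodule.mem_inf.mpr ⟨hcZ, hc⟩
        rwa [hC.inf_eq_bot, Submodule.mem_bot] at this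
      have hxd : x = d := by rw [← hx, hc0, zero_add]
      have : x ∈ A ⊓ D.toSubmodule := Submodule.mem_inf.mpr ⟨hxA, hxd ▸ hd⟩
      rwa [hADinf, Submodule.mem_bot] at this
    · rw [codisjoint_iff, hHs, sup_assoc, sup_comm D.toSubmodule A, hADsup,
        hC.symm.sup_eq_top]
  -- abelian
  have habel : IsLieAbelian AA := by
    constructor
    intro x y
    apply Subtype.ext
    show ⁅(x : L), (y : L)⁆ = 0
    exact (hZmem y).mp (hAleZ y.2) (x : L)
  -- dimension of Hs
  set Ds : Submodule F L := D.toSubmodule with hDs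
  have hm' : finrank F ↥Ds = 1 := hm
  have hCD : C ⊓ Ds = ⊥ := by
    rw [eq_bot_iff]
    intro x hx
    obtain ⟨hxC, hxD⟩ := Submodule.mem_inf.mp hx
    have : x ∈ Z.toSubmodule ⊓ C := Submodule.mem_inf.mpr ⟨hDleZ hxD, hxC⟩
    rwa [hC.inf_eq_bot, Submodule.mem_bot] at this
  have hHrank : finrank F ↥Hs = finrank F ↥C + 1 := by
    have h := Submodule.finrank_sup_add_finrank_inf_eq C Ds
    rw [hCD, finrank_bot, add_zero] at h
    rw [hHs, h, hm']
  -- basis of D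
  let bD : Basis (Fin 1) F ↥Ds := finBasisOfFinrankEq F ↥Ds hm'
  have hcoordzero : ∀ u : ↥Ds, bD.coord 0 u = 0 → u = 0 := by
    intro u h
    have hu := bD.sum_repr u
    rw [Fin.sum_univ_one] at hu
    rw [Basis.coord_apply] at h
    rw [← hu, h, zero_smul]
  -- the alternating form on C
  have hbrkt' : ∀ x y : L, ⁅x, y⁆ ∈ Ds := hbrkt
  set β : LinearMap.BilinForm F ↥C := bracketForm F L C Ds hbrkt' (bD.coord 0) with hβ
  have hβapp : ∀ c c' : ↥C, β c c' = bD.coord 0 ⟨⁅(c : L), (c' : L)⁆, hbrkt' _ _⟩ :=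
    fun c c' => rfl
  have halt : β.IsAlt := by
    intro c
    rw [hβapp]
    have h0 : (⟨⁅(c : L), (c : L)⁆, hbrkt' _ _⟩ : ↥Ds) = 0 := Subtype.ext (lie_self _)
    rw [h0, map_zero]
  have hnd : β.Nondegenerate := by
    refine (LinearMap.IsRefl.nondegenerate_iff_separatingLeft (B := β) (fun x y h => halt.isRefl x y h)).mpr ?_
    intro c hc
    have hcc' : ∀ c' : ↥C, ⁅(c : L), (c' : L)⁆ = 0 := by
      intro c'
      have := hc c'
      rw [hβapp] at this
      have h0 := hcoordzero _ this
      exact Subtype.ext_iff.mp h0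
    have hcL : ∀ y : L, ⁅(c : L), y⁆ = 0 := by
      intro y
      obtain ⟨c', hc', z, hz, rfl⟩ := hdecomp y
      rw [lie_add, hcc' ⟨c', hc'⟩, (hZmem z).mp hz (c : L), add_zero]
    have hcZ : (c : L) ∈ Z.toSubmodule := by
      apply (hZmem (c : L)).mpr
      intro x
      rw [← lie_skew, hcL x, neg_zero]
    have : (c : L) ∈ Z.toSubmodule ⊓ C := Submodule.mem_inf.mpr ⟨hcZ, c.2⟩
    rw [hC.inf_eq_bot, Submodule.mem_bot] at this
    exact Subtype.ext this
  have heven : Even (finrank F ↥C) :=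
    even_finrank_of_alt_nondeg F _ ↥C rfl β halt hnd
  obtain ⟨mm, hmm⟩ := heven
  -- derived series of H
  have hHBr : LieAlgebra.derivedSeries F (↥H) 1 = ⁅(⊤ : LieIdeal F ↥H), (⊤ : LieIdeal F ↥H)⁆ := by
    rw [LieAlgebra.derivedSeries_def, show (1 : ℕ) = 0 + 1 from rfl,
      LieAlgebra.derivedSeriesOfIdeal_succ, LieAlgebra.derivedSeriesOfIdeal_zero]
  have hderspan : (LieAlgebra.derivedSeries F (↥H) 1).toSubmodule
      = Submodule.span F {m : ↥H | ∃ x n : ↥H, ⁅x, n⁆ = m} := by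
    rw [hHBr, LieSubmodule.lieIdeal_oper_eq_linear_span']
    congr 1
    ext m
    simp
  have hDspan : Ds = Submodule.span F {m : L | ∃ x n : L, ⁅x, n⁆ = m} := by
    have h2 : D.toSubmodule = (⁅(⊤ : LieIdeal F L), (⊤ : LieIdeal F L)⁆ : LieIdeal F L).toSubmodule := by
      rw [← hDbr]
    rw [hDs, h2, LieSubmodule.lieIdeal_oper_eq_linear_span']
    congr 1
    ext m
    simp
  have hmemH : ∀ c ∈ C, c ∈ H := fun c hc => Submodule.mem_sup_left hc
  have hmemHD : ∀ d ∈ Ds, d ∈ H := fun d hd => Submodule.mem_sup_right hd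
  have hcenle : ∀ x : L, (∀ c' ∈ C, ⁅c', x⁆ = 0) → x ∈ Z.toSubmodule := by
    intro x hx
    apply (hZmem x).mpr
    intro y
    obtain ⟨c', hc', z, hz, rfl⟩ := hdecomp y
    rw [add_lie, hx c' hc', zero_add, ← lie_skew, (hZmem z).mp hz x, neg_zero]
  have hder : Submodule.map H.toSubmodule.subtype
      (LieAlgebra.derivedSeries F (↥H) 1).toSubmodule = Ds := by
    rw [hderspan, Submodule.map_span]
    apply le_antisymm
    · rw [Submodule.span_le]
      rintro _ ⟨m, ⟨x, n, rfl⟩, rfl⟩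
      show ((⁅x, n⁆ : ↥H) : L) ∈ Ds
      rw [LieSubalgebra.coe_bracket]
      exact hbrkt' _ _
    · rw [hDspan, Submodule.span_le]
      rintro _ ⟨x, y, rfl⟩
      obtain ⟨cx, hcx, zx, hzx, rfl⟩ := hdecomp x
      obtain ⟨cy, hcy, zy, hzy, rfl⟩ := hdecomp y
      have hzy0 : ⁅cx, zy⁆ = 0 := (hZmem zy).mp hzy cx
      have hzx0 : ∀ w : L, ⁅zx, w⁆ = 0 := fun w => by
        rw [← lie_skew, (hZmem zx).mp hzx w, neg_zero]
      have h1 : ⁅cx + zx, cy + zy⁆ = ⁅cx, cy⁆ := by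
        rw [add_lie, lie_add, lie_add, hzy0, hzx0, hzx0, add_zero, add_zero, add_zero]
      rw [h1]
      apply Submodule.subset_span
      refine ⟨⁅(⟨cx, hmemH cx hcx⟩ : ↥H), (⟨cy, hmemH cy hcy⟩ : ↥H)⁆, ⟨_, _, rfl⟩, ?_⟩
      rfl
  have hcen : Submodule.map H.toSubmodule.subtype
      (LieAlgebra.center F (↥H)).toSubmodule = Ds := by
    apply le_antisymm
    · rintro _ ⟨⟨x, hxH⟩, hxc, rfl⟩
      have hxc' := (LieModule.mem_maxTrivSubmodule F (↥H) (↥H) _).mp hxc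
      have hxZ : x ∈ Z.toSubmodule := by
        apply hcenle x
        intro c' hc'
        have h3 := hxc' ⟨c', hmemH c' hc'⟩
        have h4 := congrArg (Subtype.val) h3
        rw [LieSubalgebra.coe_bracket] at h4
        exact h4
      obtain ⟨c, hc, d, hd, hx⟩ := Submodule.mem_sup.mp (hxH : x ∈ Hs)
      have hcZ : c ∈ Z.toSubmodule := by
        have h5 : c = x - d := by rw [← hx]; abel
        rw [h5]
        exact Submodule.sub_mem _ hxZ (hDleZ hd)
      have hc0 : c = 0 := by
        have h6 : c ∈ Z.toSubmodule ⊓ C := Submodule.mem_inf.mpr ⟨hcZ, hc⟩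
        rwa [hC.inf_eq_bot, Submodule.mem_bot] at h6
      show x ∈ Ds
      rw [← hx, hc0, zero_add]
      exact hd
    · intro d hd
      refine ⟨⟨d, hmemHD d hd⟩, ?_, rfl⟩
      apply (LieModule.mem_maxTrivSubmodule F (↥H) (↥H) _).mpr
      intro u
      apply Subtype.ext
      rw [LieSubalgebra.coe_bracket]
      show ⁅(u : L), d⁆ = 0
      exact (hZmem d).mp (hDleZ hd) (u : L)
  have hHeq : LieAlgebra.derivedSeries F (↥H) 1 = LieAlgebra.center F (↥H) := by
    rw [← LieSubmodule.toSubmodule_inj]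
    exact Submodule.map_injective_of_injective (Submodule.injective_subtype _)
      (hder.trans hcen.symm)
  have hfr1 : finrank F ↥(LieAlgebra.derivedSeries F (↥H) 1) = 1 := by
    have e := Submodule.equivMapOfInjective H.toSubmodule.subtype
      (Submodule.injective_subtype _) (LieAlgebra.derivedSeries F (↥H) 1).toSubmodule
    have h := e.finrank_eq
    rw [hder] at h
    exact h.trans hm'
  have hHfr : finrank F ↥H = 2 * mm + 1 := by
    have h7 : finrank F ↥H = finrank F ↥Hs := rfl
    rw [h7, hHrank, hmm]
    omega
  exact ⟨mm, finrank F ↥AA, H, AA, hcomm, hcompl, ⟨hHfr, hHeq, hfr1⟩, habel, rfl⟩
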